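/- arXiv:2103.05144 — 3 statements merged into one kernel-verified Lean document; each statement's English description precedes it below -/
import Mathlib

section
/- Let {x_i}_{i=1}^N and {y_i}_{i=1}^N be finite sequences of nonnegative reals with x_i ≍_{K,C} y_i for all i (i.e. (1/K)x_i - C ≤ y_i ≤ Kx_i + C), where K ≥ 1 and C ≥ 0. If κ > 2KC, then Σ_{i=1}^N [x_i]_κ ≤ 2K · Σ_{i=1}^N [y_i]_C, where [A]_B = A if A ≥ B and 0 otherwise. -/
/-- Truncation: [A]_B = A if A ≥ B, else 0. -/
noncomputable def trunc (A B : ℝ) : ℝ := if B ≤ A then A else 0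

/-- Lemma 2.1: if x_i ≍_{K,C} y_i for all i and κ > 2KC, then
    Σ [x_i]_κ ≤ 2K Σ [y_i]_C. -/
theorem truncated_sum_comparable (N : ℕ) (x y : Fin N → ℝ) (K C κ : ℝ)
    (hK : 1 ≤ K) (hC : 0 ≤ C)
    (hx : ∀ i, 0 ≤ x i) (hy : ∀ i, 0 ≤ y i)
    (hcomp : ∀ i, (1 / K) * x i - C ≤ y i ∧ y i ≤ K * x i + C)
    (hκ : 2 * K * C < κ) :
    ∑ i, trunc (x i) κ ≤ 2 * K * ∑ i, trunc (y i) C := by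
  have hK0 : (0:ℝ) < K := lt_of_lt_of_le one_pos hK
  rw [Finset.mul_sum]
  apply Finset.sum_le_sum
  intro i _
  unfold trunc
  split_ifs with h1 h2 h2
  · -- κ ≤ x i and C ≤ y i : need x i ≤ 2K y i
    have h3 := (hcomp i).1
    have : x i ≤ 2 * K * ((1 / K) * x i - C) := by
      have : 2 * K * ((1/K) * x i - C) = 2 * x i - 2 * K * C := by
        field_simp
      rw [this]
      nlinarith
    nlinarith
  · -- κ ≤ x i but y i < C : contradiction
    exfalso
    have h3 := (hcomp i).1
    have : (1/K) * κ - C ≤ y i := by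
      have : (1/K) * κ ≤ (1/K) * x i := by
        apply mul_le_mul_of_nonneg_left h1 (by positivity)
      linarith
    have hC2 : 2 * C ≤ (1/K) * κ := by
      rw [div_mul_eq_mul_div, le_div_iff₀ hK0]
      nlinarith
    linarith
  · nlinarith [hy i]
  · nlinarith [hy i]
end

section
/- Let f : C(Y) → ℤ be defined by f(α) = α · ρ for a fixed vertex ρ, where for distinct vertices α, β one has d_Y(α, β) = |α · β| + 1 and the algebraic intersection satisfies α · ρ = α · β + β · ρ + ε(α,β,ρ) with ε ∈ {-1,0,1}. Then for all vertices α, β: |f(α) - f(β)| ≤ d_Y(α, β) ≤ |f(α) - f(β)| + 2; in particular f is a (1,2)-quasi-isometric embedding of C(Y) into ℤ. -/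
/-- The annular curve graph quasi-isometrically embeds into ℤ via algebraic
    intersection number with a fixed vertex ρ:
    |f(α) - f(β)| ≤ d_Y(α,β) ≤ |f(α) - f(β)| + 2, where f(α) = α·ρ. -/
theorem annular_graph_qi_embeds_in_int (V : Type*) (d : V → V → ℝ)
    (inter : V → V → ℤ)
    (hd0 : ∀ α, d α α = 0)
    (hdist : ∀ α β, α ≠ β → d α β = |(inter α β : ℝ)| + 1)
    (hcocycle : ∀ α β ρ, |inter α ρ - (inter α β + inter β ρ)| ≤ 1)
    (ρ : V) (f : V → ℤ) (hf : ∀ α, f α = inter α ρ) :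
    ∀ α β, (|(f α - f β : ℤ)| : ℝ) ≤ d α β ∧
      d α β ≤ (|(f α - f β : ℤ)| : ℝ) + 2 := by
  intro α β
  by_cases h : α = β
  · subst h
    simp [hd0]
  · rw [hdist α β h]
    have hc := hcocycle α β ρ
    have key : |f α - f β - inter α β| ≤ 1 := by
      rw [hf α, hf β]
      have : inter α ρ - inter β ρ - inter α β = inter α ρ - (inter α β + inter β ρ) := by ring
      rw [this]; exact hc
    have h1 : |f α - f β| ≤ |inter α β| + 1 := by
      calc |f α - f β| = |(f α - f β - inter α β) + inter α β| := by ring_nf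
        _ ≤ |f α - f β - inter α β| + |inter α β| := abs_add_le _ _
        _ ≤ |inter α β| + 1 := by omega
    have h2 : |inter α β| ≤ |f α - f β| + 1 := by
      calc |inter α β| = |(inter α β - (f α - f β)) + (f α - f β)| := by ring_nf
        _ ≤ |inter α β - (f α - f β)| + |f α - f β| := abs_add_le _ _
        _ ≤ |f α - f β| + 1 := by rw [abs_sub_comm]; omega
    constructor
    · push_cast
      have : ((|f α - f β| : ℤ) : ℝ) ≤ ((|inter α β| + 1 : ℤ) : ℝ) := by exact_mod_cast h1
      push_cast at this ⊢
      linarith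
    · have : ((|inter α β| : ℤ) : ℝ) ≤ ((|f α - f β| + 1 : ℤ) : ℝ) := by exact_mod_cast h2
      push_cast at this ⊢
      linarith
end

section
/- Let X be a geodesic metric space, and let points satisfy: x, z on geodesic [α, β], z' ∈ [β, γ], z'' ∈ [α, γ], y ∈ [β, γ], with d(z,z') ≤ δ, d(z,z'') ≤ δ, d(z,β) ≤ C₀, d(z',β) ≤ C₀, d(x,β) > C₀, d(y,β) > C₀, and suppose there exist x' ∈ [α, z''] with d(x,x') ≤ 2δ and y' ∈ [z'', γ] with d(y,y') ≤ 3δ. Then d(x,β) + d(β,y) ≤ d(x,y) + 2C₀ + 13δ. -/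
/-- Case 2 of Lemma 3.3: with the thin-triangle points z, z', z'', x', y' as in the
    proof, d(x,β) + d(β,y) ≤ d(x,y) + 2C₀ + 13δ. -/
theorem case2_lemma33 (X : Type*) [MetricSpace X]
    (α β γ z'' x y z z' x' y' : X) (δ C₀ : ℝ) (hδ : 0 ≤ δ) (hC₀ : 0 ≤ C₀)
    -- x, z lie on a geodesic [α, β] with z between x and β:
    (hxz : dist x β = dist x z + dist z β)
    -- y, z' lie on a geodesic [β, γ] with z' between β and y:
    (hyz : dist β y = dist β z' + dist z' y)
    (hzz' : dist z z' ≤ δ) (hzz'' : dist z z'' ≤ δ)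
    (hzβ : dist z β ≤ C₀) (hz'β : dist z' β ≤ C₀)
    (hxβ : C₀ < dist x β) (hyβ : C₀ < dist y β)
    (hxx' : dist x x' ≤ 2 * δ) (hyy' : dist y y' ≤ 3 * δ)
    -- x' ∈ [α, z''] and y' ∈ [z'', γ], so z'' lies between x' and y':
    (hx' : dist α x' + dist x' z'' = dist α z'')
    (hy' : dist z'' y' + dist y' γ = dist z'' γ)
    (hmid : dist x' z'' + dist z'' y' = dist x' y') :
    dist x β + dist β y ≤ dist x y + 2 * C₀ + 13 * δ := by
  have t1 := dist_triangle4 x x' z'' z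
  have t2 := dist_triangle4 z' z z'' y'
  have t2b := dist_triangle z' z'' y
  have t2c := dist_triangle z' y' y
  have t3 := dist_triangle4 x' x y y'
  have e1 : dist z'' z = dist z z'' := dist_comm _ _
  have e2 : dist z' z = dist z z' := dist_comm _ _
  have e3 : dist x' x = dist x x' := dist_comm _ _
  have e4 : dist y' y = dist y y' := dist_comm _ _
  have t4 : dist z' y ≤ dist z' z + dist z z'' + dist z'' y' + dist y' y := by
    calc dist z' y ≤ dist z' y' + dist y' y := dist_triangle _ _ _
    _ ≤ (dist z' z + dist z z'' + dist z'' y') + dist y' y := by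
        have := dist_triangle4 z' z z'' y'; linarith
  have e5 : dist β z' = dist z' β := dist_comm _ _
  linarith
end
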